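/- Let c₁,…,cₘ be positive reals, B₁,…,Bₘ linear maps Bᵢ : ℝⁿ → ℝ^{nᵢ}, and A₁,…,Aₘ positive definite matrices on ℝ^{n₁},…,ℝ^{nₘ} respectively. Assume S = Σᵢ cᵢ Bᵢ* Aᵢ⁻¹ Bᵢ is positive definite and set A = S⁻¹. Then for every x ∈ ℝⁿ, ⟨A x, x⟩ = inf { Σᵢ cᵢ ⟨Aᵢ xᵢ, xᵢ⟩ : (x₁,…,xₘ) ∈ ℝ^{n₁}×⋯×ℝ^{nₘ}, Σᵢ cᵢ Bᵢ* xᵢ = x }, and the infimum is attained at xᵢ = Aᵢ⁻¹ Bᵢ A x. -/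

import Mathlib

open Matrix

private lemma sum_mulVec' {k l : ℕ} {ι : Type*} (s : Finset ι) (M : ι → Matrix (Fin k) (Fin l) ℝ)
    (v : Fin l → ℝ) : (∑ i ∈ s, M i).mulVec v = ∑ i ∈ s, (M i).mulVec v := by
  ext j
  simp [Matrix.mulVec, dotProduct, Finset.sum_apply, Matrix.sum_apply, Finset.sum_mul]
  rw [Finset.sum_comm]

private lemma mulVec_dp {k l : ℕ} (M : Matrix (Fin k) (Fin l) ℝ) (w : Fin l → ℝ) (z : Fin k → ℝ) :
    M.mulVec w ⬝ᵥ z = w ⬝ᵥ Mᵀ.mulVec z := by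
  rw [dotProduct_comm, dotProduct_mulVec, ← mulVec_transpose, dotProduct_comm]

private lemma dp_sum {k : ℕ} {ι : Type*} (s : Finset ι) (v : Fin k → ℝ) (w : ι → Fin k → ℝ) :
    ∑ i ∈ s, v ⬝ᵥ w i = v ⬝ᵥ ∑ i ∈ s, w i := by
  simp only [dotProduct, Finset.sum_apply, Finset.mul_sum]
  rw [Finset.sum_comm]

theorem quadratic_infimum_lemma
    (m n : ℕ) (ni : Fin m → ℕ) (c : Fin m → ℝ) (hc : ∀ i, 0 < c i)
    (B : ∀ i, Matrix (Fin (ni i)) (Fin n) ℝ)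
    (Ai : ∀ i, Matrix (Fin (ni i)) (Fin (ni i)) ℝ) (hAi : ∀ i, (Ai i).PosDef)
    (S : Matrix (Fin n) (Fin n) ℝ)
    (hS : S = ∑ i, c i • ((B i)ᵀ * (Ai i)⁻¹ * B i)) (hSpos : S.PosDef)
    (A : Matrix (Fin n) (Fin n) ℝ) (hA : A = S⁻¹) (x : Fin n → ℝ) :
    IsLeast {r : ℝ | ∃ y : ∀ i, Fin (ni i) → ℝ,
        (∑ i, c i • (B i)ᵀ.mulVec (y i)) = x ∧
        r = ∑ i, c i * ((Ai i).mulVec (y i) ⬝ᵥ y i)}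
      (A.mulVec x ⬝ᵥ x) ∧
    (∑ i, c i • (B i)ᵀ.mulVec ((Ai i)⁻¹.mulVec ((B i).mulVec (A.mulVec x)))) = x ∧
    A.mulVec x ⬝ᵥ x =
      ∑ i, c i * ((Ai i).mulVec ((Ai i)⁻¹.mulVec ((B i).mulVec (A.mulVec x))) ⬝ᵥ
        (Ai i)⁻¹.mulVec ((B i).mulVec (A.mulVec x))) := by
  have hSA : S * A = 1 := by
    rw [hA]; exact Matrix.mul_nonsing_inv S (isUnit_iff_ne_zero.mpr hSpos.det_pos.ne')
  have hAiinv : ∀ i, Ai i * (Ai i)⁻¹ = 1 := fun i =>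
    Matrix.mul_nonsing_inv _ (isUnit_iff_ne_zero.mpr (hAi i).det_pos.ne')
  set v := A.mulVec x with hv
  set z : ∀ i, Fin (ni i) → ℝ := fun i => (Ai i)⁻¹.mulVec ((B i).mulVec v) with hz
  have hAz : ∀ i, (Ai i).mulVec (z i) = (B i).mulVec v := by
    intro i
    show (Ai i).mulVec ((Ai i)⁻¹.mulVec ((B i).mulVec v)) = _
    rw [Matrix.mulVec_mulVec, hAiinv i, Matrix.one_mulVec]
  have hconstr : (∑ i, c i • (B i)ᵀ.mulVec (z i)) = x := by
    have h1 : ∀ i, c i • (B i)ᵀ.mulVec (z i) = (c i • ((B i)ᵀ * (Ai i)⁻¹ * B i)).mulVec v := by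
      intro i
      rw [Matrix.smul_mulVec]
      congr 1
      show (B i)ᵀ.mulVec ((Ai i)⁻¹.mulVec ((B i).mulVec v)) = _
      rw [Matrix.mulVec_mulVec, Matrix.mulVec_mulVec, Matrix.mul_assoc]
    simp_rw [h1]
    rw [← sum_mulVec', ← hS, hv, Matrix.mulVec_mulVec, hSA, Matrix.one_mulVec]
  have hsym : ∀ i, (Ai i)ᵀ = Ai i := fun i => by
    simpa using (hAi i).isHermitian.eq
  -- value at the minimizer
  have hval : ∑ i, c i * ((Ai i).mulVec (z i) ⬝ᵥ z i) = v ⬝ᵥ x := by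
    calc ∑ i, c i * ((Ai i).mulVec (z i) ⬝ᵥ z i)
        = ∑ i, v ⬝ᵥ (c i • (B i)ᵀ.mulVec (z i)) := by
          refine Finset.sum_congr rfl fun i _ => ?_
          rw [hAz i, mulVec_dp, dotProduct_smul, smul_eq_mul]
      _ = v ⬝ᵥ ∑ i, c i • (B i)ᵀ.mulVec (z i) := dp_sum _ _ _
      _ = v ⬝ᵥ x := by rw [hconstr]
  refine ⟨⟨⟨z, hconstr, ?_⟩, ?_⟩, hconstr, ?_⟩
  · exact hval.symm
  · rintro r ⟨y, hy, hr⟩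
    have hposs : ∀ i, 0 ≤ (Ai i).mulVec (y i - z i) ⬝ᵥ (y i - z i) := by
      intro i
      have h := (hAi i).posSemidef.dotProduct_mulVec_nonneg (y i - z i)
      simpa [dotProduct_comm] using h
    have hcross : ∀ i, (Ai i).mulVec (y i) ⬝ᵥ z i = (Ai i).mulVec (z i) ⬝ᵥ y i := by
      intro i
      rw [mulVec_dp, hsym i, dotProduct_comm]
    have hcrosssum : ∑ i, c i * ((Ai i).mulVec (z i) ⬝ᵥ y i) = v ⬝ᵥ x := by
      calc ∑ i, c i * ((Ai i).mulVec (z i) ⬝ᵥ y i)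
          = ∑ i, v ⬝ᵥ (c i • (B i)ᵀ.mulVec (y i)) := by
            refine Finset.sum_congr rfl fun i _ => ?_
            rw [hAz i, mulVec_dp, dotProduct_smul, smul_eq_mul]
        _ = v ⬝ᵥ ∑ i, c i • (B i)ᵀ.mulVec (y i) := dp_sum _ _ _
        _ = v ⬝ᵥ x := by rw [hy]
    have hexp : ∀ i, c i * ((Ai i).mulVec (y i) ⬝ᵥ y i) =
        c i * ((Ai i).mulVec (y i - z i) ⬝ᵥ (y i - z i)) +
        2 * (c i * ((Ai i).mulVec (z i) ⬝ᵥ y i)) - c i * ((Ai i).mulVec (z i) ⬝ᵥ z i) := by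
      intro i
      have e1 : (Ai i).mulVec (y i - z i) ⬝ᵥ (y i - z i) =
          (Ai i).mulVec (y i) ⬝ᵥ y i - (Ai i).mulVec (y i) ⬝ᵥ z i -
          (Ai i).mulVec (z i) ⬝ᵥ y i + (Ai i).mulVec (z i) ⬝ᵥ z i := by
        rw [Matrix.mulVec_sub, sub_dotProduct, dotProduct_sub, dotProduct_sub]
        ring
      rw [e1, hcross i]; ring
    have hdecomp : r = (∑ i, c i * ((Ai i).mulVec (y i - z i) ⬝ᵥ (y i - z i))) +
        2 * (v ⬝ᵥ x) - (v ⬝ᵥ x) := by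
      rw [hr]
      simp_rw [hexp]
      rw [Finset.sum_sub_distrib, Finset.sum_add_distrib, ← Finset.mul_sum, hcrosssum, hval]
    have hnn : 0 ≤ ∑ i, c i * ((Ai i).mulVec (y i - z i) ⬝ᵥ (y i - z i)) :=
      Finset.sum_nonneg fun i _ => mul_nonneg (hc i).le (hposs i)
    show v ⬝ᵥ x ≤ r
    rw [hdecomp]; linarith
  · exact hval.symm
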